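/- For every nonnegative integers x and y, the product of central binomial probabilities satisfies d(y)·d(x) ≤ d(x+y), where d(x) = 2^(-2x)·C(2x,x). -/

import Mathlib

noncomputable def centralBinomProb (x : ℕ) : ℝ := (Nat.choose (2 * x) x : ℝ) / 4 ^ x

lemma choose_mul_le (x y : ℕ) :
    Nat.choose (2*x) x * Nat.choose (2*y) y ≤ Nat.choose (2*(x+y)) (x+y) := by
  have h : 2*(x+y) = 2*x + 2*y := by ring
  rw [h, Nat.add_choose_eq]
  have hm : (x, y) ∈ Finset.HasAntidiagonal.antidiagonal (x + y) := by simp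
  exact Finset.single_le_sum (f := fun ij => Nat.choose (2*x) ij.1 * Nat.choose (2*y) ij.2) (fun i _ => Nat.zero_le _) hm

theorem central_binom_prob_supermultiplicative (x y : ℕ) :
    centralBinomProb y * centralBinomProb x ≤ centralBinomProb (x + y) := by
  unfold centralBinomProb
  rw [div_mul_div_comm, ← pow_add, add_comm y x]
  gcongr
  exact_mod_cast (mul_comm (Nat.choose (2*y) y) (Nat.choose (2*x) x) ▸ choose_mul_le x y)
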